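/- Let V be a finite-dimensional real vector space with a symplectic form η, and let 𝒥 denote the set of complex structures J on V (J² = -Id) such that η(·, J·) is a positive-definite inner product. The tangent space to 𝒥 at J can be identified with endomorphisms j of V satisfying jJ + Jj = 0 and j + j* = 0 (where j* is the η-adjoint). Then for any nonzero vector v ∈ V and any J ∈ 𝒥, the evaluation map sending j to j(v) is surjective onto V. -/

import Mathlib

/-- For a symplectic form η on a finite-dimensional real vector
space V and a compatible complex structure J, the evaluation map at any
nonzero vector v, from the tangent space of the space of compatible complex
structures at J (endomorphisms j with jJ + Jj = 0 and j η-skew-adjoint),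
onto V is surjective. -/
theorem biinvariant_diagonal_stmt0
    {V : Type*} [AddCommGroup V] [Module ℝ V] [FiniteDimensional ℝ V]
    (η : V →ₗ[ℝ] V →ₗ[ℝ] ℝ)
    (halt : ∀ v : V, η v v = 0)
    (hnd : ∀ v : V, (∀ w : V, η v w = 0) → v = 0)
    (J : V →ₗ[ℝ] V)
    (hJ : J ∘ₗ J = -LinearMap.id)
    (hcompat : ∀ v w : V, η v (J w) = η w (J v))
    (hpos : ∀ v : V, v ≠ 0 → 0 < η v (J v))
    (v : V) (hv : v ≠ 0) (u : V) :
    ∃ j : V →ₗ[ℝ] V,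
      j ∘ₗ J + J ∘ₗ j = 0 ∧
      (∀ x y : V, η (j x) y = - η x (j y)) ∧
      j v = u := by
  have hskew : ∀ x y : V, η x y = - η y x := by
    intro x y
    have h := halt (x + y)
    simp only [map_add, LinearMap.add_apply] at h
    rw [halt x, halt y] at h
    linarith
  have hJJ : ∀ x : V, J (J x) = -x := by
    intro x
    have := LinearMap.ext_iff.mp hJ x
    simpa using this
  set c := η v (J v) with hcdef
  have hc : 0 < c := hpos v hv
  set a := η u (J v) with hadef
  set b := η v u with hbdef
  -- rank-two g-symmetric maps, where g x y := η x (J y)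
  set sym2 : V → V → (V →ₗ[ℝ] V) := fun p q =>
    ((η p).comp J).smulRight q + ((η q).comp J).smulRight p with hsym2def
  have hsym2 : ∀ p q x : V, sym2 p q x = η p (J x) • q + η q (J x) • p := by
    intro p q x; rfl
  have hsym2sym : ∀ p q x y : V, η (sym2 p q x) (J y) = η x (J (sym2 p q y)) := by
    intro p q x y
    simp only [hsym2, map_add, map_smul, LinearMap.add_apply, LinearMap.smul_apply,
      smul_eq_mul]
    rw [hcompat x q, hcompat x p]
    ring
  set S : V →ₗ[ℝ] V :=
    (1/c) • sym2 v u - (a/(2*c^2)) • sym2 v v - (b/(2*c^2)) • sym2 v (J v) with hSdef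
  have hSsym : ∀ x y : V, η (S x) (J y) = η x (J (S y)) := by
    intro x y
    simp only [hSdef, LinearMap.sub_apply, LinearMap.smul_apply, map_sub, map_smul,
      smul_eq_mul]
    rw [hsym2sym v u x y, hsym2sym v v x y, hsym2sym v (J v) x y]
  refine ⟨S + J ∘ₗ S ∘ₗ J, ?_, ?_, ?_⟩
  · ext x
    simp only [LinearMap.add_apply, LinearMap.comp_apply, LinearMap.zero_apply,
      LinearMap.add_comp, LinearMap.comp_add]
    rw [hJJ, hJJ]
    simp [map_neg]
  · intro x y
    have claim1 : η (S x) y = - η x (J (S (J y))) := by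
      have hy : y = -(J (J y)) := by rw [hJJ]; simp
      calc η (S x) y = η (S x) (-(J (J y))) := by rw [← hy]
        _ = - η (S x) (J (J y)) := by simp
        _ = - η x (J (S (J y))) := by rw [hSsym x (J y)]
    have claim2 : η (J (S (J x))) y = - η x (S y) := by
      calc η (J (S (J x))) y = - η y (J (S (J x))) := hskew _ _
        _ = - η (S (J x)) (J y) := by rw [hcompat y (S (J x))]
        _ = - η (J x) (J (S y)) := by rw [hSsym (J x) y]
        _ = - η (S y) (J (J x)) := by rw [hcompat (J x) (S y)]
        _ = - η (S y) (-x) := by rw [hJJ]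
        _ = η (S y) x := by simp
        _ = - η x (S y) := by rw [hskew]
    simp only [LinearMap.add_apply, LinearMap.comp_apply, map_add, LinearMap.add_apply]
    rw [claim1, claim2]
    ring
  · -- evaluate at v
    have h1 : η v (J (J v)) = 0 := by rw [hJJ]; simp [halt]
    have h2 : η (J v) (J (J v)) = c := by
      rw [hJJ]; rw [show η (J v) (-v) = - η (J v) v by simp, hskew (J v) v]; simp; exact hcdef.symm
    have h3 : η u (J (J v)) = b := by
      rw [hJJ]; rw [show η u (-v) = - η u v by simp, hskew u v, neg_neg]
    have h4 : η (J v) (J v) = 0 := halt (J v)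
    simp only [LinearMap.add_apply, LinearMap.comp_apply, hSdef, LinearMap.sub_apply,
      LinearMap.smul_apply, hsym2, map_add, map_smul, smul_add, smul_smul]
    rw [h1, h2, h3, h4, ← hcdef]
    simp only [mul_zero, zero_smul, smul_zero, add_zero, zero_add, sub_zero, map_add,
      map_smul, map_sub]
    match_scalars <;> field_simp <;> ring
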